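/- Let n ≥ 1 and let (p, q) be a Farey chain of length n. Then, working in ℤ, (q 1) + (p n) + ∑_{i=1}^{n} ( p (i+1) * q (i-1) − p (i-1) * q (i+1) ) = 3n. (Geometrically: the sum of the self-intersection numbers of the n+2 spheres in the ring configuration in #ⁿℂP², namely the cyclic Farey distances Δ(p_{i−1}/q_{i−1}, p_{i+1}/q_{i+1}), equals 3n.) -/

import Mathlib

set_option maxHeartbeats 1000000 in
theorem farey_aux (n : ℕ) (hn : 1 ≤ n) : ∀ (p q : ℕ → ℕ),
    p 0 = 0 → q 0 = 1 → p (n + 1) = 1 → q (n + 1) = 0 →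
    (∀ i ≤ n, p (i + 1) * q i = p i * q (i + 1) + 1) →
    (q 1 : ℤ) + (p n : ℤ) +
      ∑ j ∈ Finset.range n,
        ((p (j + 2) : ℤ) * (q j : ℤ) - (p j : ℤ) * (q (j + 2) : ℤ)) = 3 * n := by
  induction n, hn using Nat.le_induction with
  | base =>
    intro p q hp0 hq0 hpn hqn hfarey
    have h0 := hfarey 0 (by omega)
    have h1 := hfarey 1 (by omega)
    simp only [Nat.zero_add, hp0, hq0, hpn, hqn, mul_one, zero_mul, mul_zero] at h0 h1
    simp [Finset.sum_range_one, hp0, hq0, hpn, hqn, h0]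
    omega
  | succ n hn IH =>
    intro p q hp0 hq0 hpn hqn hfarey
    have hd : ∀ i ≤ n + 1, (p (i + 1) : ℤ) * q i - (p i : ℤ) * q (i + 1) = 1 := by
      intro i hi
      have h := hfarey i hi
      zify at h
      linarith
    have hqpos : ∀ i ≤ n + 1, 1 ≤ q i := by
      intro i hi
      by_contra h
      have hqi : q i = 0 := by omega
      have := hfarey i hi
      rw [hqi, mul_zero] at this
      omega
    have hp1 : p 1 = 1 := by
      have h := hfarey 0 (by omega)
      rw [Nat.zero_add, hp0, hq0, mul_one, zero_mul] at h
      omega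
    obtain ⟨k, hkmem, hkmax⟩ := Finset.exists_max_image (Finset.Icc 1 (n + 1))
        (fun i => p i + q i) ⟨1, Finset.mem_Icc.mpr ⟨le_refl 1, by omega⟩⟩
    simp only [Finset.mem_Icc] at hkmem hkmax
    obtain ⟨K, rfl⟩ : ∃ K, k = K + 1 := ⟨k - 1, by omega⟩
    have hK : K ≤ n := by omega
    have e1 := hd K (by omega)
    have e2 := hd (K + 1) (by omega)
    obtain ⟨a, ha_def⟩ : ∃ a : ℤ, a = (p (K + 2) : ℤ) * q K - (p K : ℤ) * q (K + 2) := ⟨_, rfl⟩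
    have hP : a * p (K + 1) = p (K + 2) + p K := by
      rw [ha_def]
      linear_combination (p (K + 2) : ℤ) * e1 + (p K : ℤ) * e2
    have hQ : a * q (K + 1) = q (K + 2) + q K := by
      rw [ha_def]
      linear_combination (q (K + 2) : ℤ) * e1 + (q K : ℤ) * e2
    have hq1pos := hqpos 1 (by omega)
    have hqK1pos := hqpos (K + 1) (by omega)
    have hqKpos := hqpos K (by omega)
    have hsKle : p K + q K ≤ p (K + 1) + q (K + 1) := by
      rcases Nat.eq_zero_or_pos K with h0 | h1
      · rw [h0, hp0, hq0, Nat.zero_add]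
        omega
      · exact hkmax K ⟨h1, by omega⟩
    have hsK2le : p (K + 2) + q (K + 2) ≤ p (K + 1) + q (K + 1) := by
      rcases Nat.lt_or_ge K n with h | h
      · exact hkmax (K + 2) ⟨by omega, by omega⟩
      · have hKn : K = n := by omega
        rw [hKn, show n + 2 = n + 1 + 1 from rfl, hpn, hqn, ← hKn]
        omega
    have ha1 : a = 1 := by
      have hS : a * ((p (K + 1) : ℤ) + q (K + 1)) =
          ((p (K + 2) : ℤ) + q (K + 2)) + ((p K : ℤ) + q K) := by linarith
      have hb1 : (1 : ℤ) ≤ (p (K + 1) : ℤ) + q (K + 1) := by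
        have h1 : (1 : ℤ) ≤ (q (K + 1) : ℤ) := by exact_mod_cast hqK1pos
        have h2 : (0 : ℤ) ≤ (p (K + 1) : ℤ) := Int.natCast_nonneg _
        linarith
      have hb0 : (1 : ℤ) ≤ (p K : ℤ) + q K := by
        have h1 : (1 : ℤ) ≤ (q K : ℤ) := by exact_mod_cast hqKpos
        have h2 : (0 : ℤ) ≤ (p K : ℤ) := Int.natCast_nonneg _
        linarith
      have hb2 : (0 : ℤ) ≤ (p (K + 2) : ℤ) + q (K + 2) := by positivity
      have hle0 : ((p K : ℤ) + q K) ≤ (p (K + 1) : ℤ) + q (K + 1) := by exact_mod_cast hsKle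
      have hle2 : ((p (K + 2) : ℤ) + q (K + 2)) ≤ (p (K + 1) : ℤ) + q (K + 1) := by
        exact_mod_cast hsK2le
      have hage1 : 1 ≤ a := by
        rcases le_or_gt a 0 with h | h
        · have hnp : a * ((p (K + 1) : ℤ) + q (K + 1)) ≤ 0 :=
            mul_nonpos_iff.mpr (Or.inr ⟨h, by linarith⟩)
          linarith
        · omega
      have hale2 : a ≤ 2 := by
        have h2 : a * ((p (K + 1) : ℤ) + q (K + 1)) ≤ 2 * ((p (K + 1) : ℤ) + q (K + 1)) := by
          linarith
        exact le_of_mul_le_mul_right h2 (by linarith)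
      rcases (show a = 1 ∨ a = 2 by omega) with h | h
      · exact h
      · exfalso
        rw [h] at hS
        have hsum : (p K : ℤ) + q K = (p (K + 1) : ℤ) + q (K + 1) := by linarith
        have key : ((p (K + 1) : ℤ) + q (K + 1)) * ((p (K + 1) : ℤ) - p K) = 1 := by
          linear_combination e1 - (p (K + 1) : ℤ) * hsum
        have hS1 : (p (K + 1) : ℤ) + q (K + 1) = 1 := by
          rcases Int.isUnit_iff.mp (IsUnit.of_mul_eq_one _ key) with h' | h'
          · exact h'
          · have h2 : (0 : ℤ) ≤ (p (K + 1) : ℤ) := Int.natCast_nonneg _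
            have h3 : (0 : ℤ) ≤ (q (K + 1) : ℤ) := Int.natCast_nonneg _
            omega
        have hmax1 := hkmax 1 ⟨le_refl _, by omega⟩
        simp only [hp1] at hmax1
        have hS1' : p (K + 1) + q (K + 1) = 1 := by exact_mod_cast hS1
        omega
    have hpm : p (K + 1) = p (K + 2) + p K := by
      rw [ha1, one_mul] at hP; exact_mod_cast hP
    have hqm : q (K + 1) = q (K + 2) + q K := by
      rw [ha1, one_mul] at hQ; exact_mod_cast hQ
    -- blow down
    obtain ⟨p', hp'def⟩ : ∃ f : ℕ → ℕ, f = fun i => if i ≤ K then p i else p (i + 1) := ⟨_, rfl⟩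
    obtain ⟨q', hq'def⟩ : ∃ f : ℕ → ℕ, f = fun i => if i ≤ K then q i else q (i + 1) := ⟨_, rfl⟩
    have hfarey' : ∀ i ≤ n, p' (i + 1) * q' i = p' i * q' (i + 1) + 1 := by
      intro i hi
      simp only [hp'def, hq'def]
      split_ifs with h1 h2 h2
      · exact hfarey i (by omega)
      · omega
      · -- i = K : use a = 1
        have hiK : i = K := by omega
        have ha := ha_def.symm.trans ha1
        zify
        rw [hiK, show K + 1 + 1 = K + 2 from rfl]
        linarith
      · exact hfarey (i + 1) (by omega)
    have hp'0 : p' 0 = 0 := by simp [hp'def, hp0]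
    have hq'0 : q' 0 = 1 := by simp [hq'def, hq0]
    have hp'n : p' (n + 1) = 1 := by
      simp only [hp'def]
      rw [if_neg (by omega)]
      exact hpn
    have hq'n : q' (n + 1) = 0 := by
      simp only [hq'def]
      rw [if_neg (by omega)]
      exact hqn
    have hIH := IH p' q' hp'0 hq'0 hp'n hq'n hfarey'
    have hpKZ : (p K : ℤ) = p (K + 1) - p (K + 2) := by
      have h : (p (K + 1) : ℤ) = p (K + 2) + p K := by exact_mod_cast hpm
      linarith
    have hqKZ : (q K : ℤ) = q (K + 1) - q (K + 2) := by
      have h : (q (K + 1) : ℤ) = q (K + 2) + q K := by exact_mod_cast hqm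
      linarith
    have Hsplit : ∑ j ∈ Finset.range (n + 1),
        ((p (j + 2) : ℤ) * (q j : ℤ) - (p j : ℤ) * (q (j + 2) : ℤ)) =
        (∑ j ∈ Finset.range K, ((p (j + 2) : ℤ) * (q j : ℤ) - (p j : ℤ) * (q (j + 2) : ℤ)))
        + ((p (K + 2) : ℤ) * (q K : ℤ) - (p K : ℤ) * (q (K + 2) : ℤ))
        + ∑ j ∈ Finset.Ico (K + 1) (n + 1),
            ((p (j + 2) : ℤ) * (q j : ℤ) - (p j : ℤ) * (q (j + 2) : ℤ)) := by
      rw [Finset.range_eq_Ico,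
        ← Finset.sum_Ico_consecutive _ (Nat.zero_le K) (show K ≤ n + 1 by omega),
        Finset.sum_eq_sum_Ico_succ_bot (show K < n + 1 by omega), ← Finset.range_eq_Ico]
      ring
    have Hsplit' : ∑ j ∈ Finset.range n,
        ((p' (j + 2) : ℤ) * (q' j : ℤ) - (p' j : ℤ) * (q' (j + 2) : ℤ)) =
        (∑ j ∈ Finset.range K, ((p' (j + 2) : ℤ) * (q' j : ℤ) - (p' j : ℤ) * (q' (j + 2) : ℤ)))
        + ∑ j ∈ Finset.Ico K n,
            ((p' (j + 2) : ℤ) * (q' j : ℤ) - (p' j : ℤ) * (q' (j + 2) : ℤ)) := by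
      rw [Finset.range_eq_Ico,
        ← Finset.sum_Ico_consecutive _ (Nat.zero_le K) (show K ≤ n by omega),
        ← Finset.range_eq_Ico]
    have Hlow : ∑ j ∈ Finset.range K,
        ((p' (j + 2) : ℤ) * (q' j : ℤ) - (p' j : ℤ) * (q' (j + 2) : ℤ)) =
        (∑ j ∈ Finset.range K, ((p (j + 2) : ℤ) * (q j : ℤ) - (p j : ℤ) * (q (j + 2) : ℤ)))
        - (if K = 0 then 0 else 1) := by
      rcases Nat.eq_zero_or_pos K with h0 | hKpos
      · rw [h0]; simp
      · obtain ⟨t, rfl⟩ : ∃ t, K = t + 1 := ⟨K - 1, by omega⟩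
        rw [if_neg (by omega), Finset.sum_range_succ, Finset.sum_range_succ]
        have hcong : ∑ j ∈ Finset.range t,
            ((p' (j + 2) : ℤ) * (q' j : ℤ) - (p' j : ℤ) * (q' (j + 2) : ℤ)) =
            ∑ j ∈ Finset.range t,
            ((p (j + 2) : ℤ) * (q j : ℤ) - (p j : ℤ) * (q (j + 2) : ℤ)) := by
          apply Finset.sum_congr rfl
          intro j hj
          simp only [Finset.mem_range] at hj
          simp only [hp'def, hq'def]
          split_ifs <;> first | rfl | omega
        rw [hcong]
        have hlast : (p' (t + 2) : ℤ) * (q' t : ℤ) - (p' t : ℤ) * (q' (t + 2) : ℤ) =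
            ((p (t + 2) : ℤ) * (q t : ℤ) - (p t : ℤ) * (q (t + 2) : ℤ)) - 1 := by
          simp only [hp'def, hq'def]
          simp only [if_neg (show ¬ t + 2 ≤ t + 1 by omega), if_pos (show t ≤ t + 1 by omega)]
          have e := hd t (by omega)
          have hpZ : (p (t + 2 + 1) : ℤ) = p (t + 2) - p (t + 1) := by
            rw [show t + 2 + 1 = (t + 1) + 2 from by ring, show t + 2 = (t + 1) + 1 from rfl]
            linarith [hpKZ]
          have hqZ : (q (t + 2 + 1) : ℤ) = q (t + 2) - q (t + 1) := by
            rw [show t + 2 + 1 = (t + 1) + 2 from by ring, show t + 2 = (t + 1) + 1 from rfl]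
            linarith [hqKZ]
          rw [hpZ, hqZ]
          linear_combination -e
        rw [hlast]
        ring
    have Hhigh : ∑ j ∈ Finset.Ico K n,
        ((p' (j + 2) : ℤ) * (q' j : ℤ) - (p' j : ℤ) * (q' (j + 2) : ℤ)) =
        (∑ j ∈ Finset.Ico (K + 1) (n + 1),
          ((p (j + 2) : ℤ) * (q j : ℤ) - (p j : ℤ) * (q (j + 2) : ℤ)))
        - (if K = n then 0 else 1) := by
      rcases Nat.eq_or_lt_of_le hK with h | hlt
      · rw [h]; simp
      · rw [if_neg (by omega), Finset.sum_eq_sum_Ico_succ_bot hlt,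
          Finset.sum_eq_sum_Ico_succ_bot (show K + 1 < n + 1 by omega)]
        have hfirst : (p' (K + 2) : ℤ) * (q' K : ℤ) - (p' K : ℤ) * (q' (K + 2) : ℤ) =
            ((p (K + 1 + 2) : ℤ) * (q (K + 1) : ℤ) - (p (K + 1) : ℤ) * (q (K + 1 + 2) : ℤ)) - 1 := by
          simp only [hp'def, hq'def]
          simp only [if_neg (show ¬ K + 2 ≤ K by omega), if_pos (le_refl K)]
          have e3 := hd (K + 2) (by omega)
          rw [show K + 2 + 1 = K + 1 + 2 from by ring]
          rw [hpKZ, hqKZ]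
          rw [show K + 1 + 2 = K + 2 + 1 from by ring] at e3 ⊢
          linear_combination -e3
        have hrest : ∑ j ∈ Finset.Ico (K + 1) n,
            ((p' (j + 2) : ℤ) * (q' j : ℤ) - (p' j : ℤ) * (q' (j + 2) : ℤ)) =
            ∑ j ∈ Finset.Ico (K + 2) (n + 1),
            ((p (j + 2) : ℤ) * (q j : ℤ) - (p j : ℤ) * (q (j + 2) : ℤ)) := by
          rw [Finset.sum_Ico_eq_sum_range, Finset.sum_Ico_eq_sum_range]
          rw [show n + 1 - (K + 2) = n - (K + 1) from by omega]
          apply Finset.sum_congr rfl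
          intro i _
          simp only [hp'def, hq'def]
          simp only [if_neg (show ¬ K + 1 + i ≤ K by omega), if_neg (show ¬ K + 1 + i + 2 ≤ K by omega)]
          rw [show K + 1 + i + 2 + 1 = K + 2 + i + 2 from by ring,
            show K + 1 + i + 1 = K + 2 + i from by ring]
        rw [hfirst, hrest]
        ring
    have Hq1 : (q' 1 : ℤ) = (q 1 : ℤ) - (if K = 0 then 1 else 0) := by
      rcases Nat.eq_zero_or_pos K with h0 | hKpos
      · rw [if_pos h0]
        simp only [hq'def]
        rw [if_neg (by omega)]
        rw [h0] at hqm
        rw [Nat.zero_add] at hqm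
        rw [hq0] at hqm
        have : (q 1 : ℤ) = (q 2 : ℤ) + 1 := by exact_mod_cast hqm
        rw [show (1:ℕ) + 1 = 2 from rfl]
        linarith
      · rw [if_neg (by omega)]
        simp only [hq'def]
        rw [if_pos (show 1 ≤ K from hKpos)]
        ring
    have Hpn : (p' n : ℤ) = (p (n + 1) : ℤ) - (if K = n then 1 else 0) := by
      rcases Nat.eq_or_lt_of_le hK with h | hlt
      · rw [if_pos h]
        simp only [hp'def]
        rw [if_pos (show n ≤ K from le_of_eq h.symm)]
        rw [h] at hpm
        rw [show n + 2 = n + 1 + 1 from rfl, hpn] at hpm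
        have : (p (n + 1) : ℤ) = 1 + (p n : ℤ) := by exact_mod_cast hpm
        linarith
      · rw [if_neg (by omega)]
        simp only [hp'def]
        rw [if_neg (show ¬ n ≤ K by omega)]
        ring
    -- assemble
    rw [Hsplit, ← ha_def, ha1]
    rw [Hsplit', Hlow, Hhigh, Hq1, Hpn] at hIH
    split_ifs at hIH <;> push_cast at hIH ⊢ <;> first | linarith | omega


/-- For a Farey chain of length `n ≥ 1`, the cyclic sum of
next-nearest-neighbor Farey distances equals `3n`. -/
theorem farey_chain_selfintersection_sum (n : ℕ) (hn : 1 ≤ n) (p q : ℕ → ℕ)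
    (hp0 : p 0 = 0) (hq0 : q 0 = 1)
    (hpn : p (n + 1) = 1) (hqn : q (n + 1) = 0)
    (hfarey : ∀ i ≤ n, p (i + 1) * q i = p i * q (i + 1) + 1) :
    (q 1 : ℤ) + (p n : ℤ) +
      ∑ i ∈ Finset.Icc 1 n,
        ((p (i + 1) : ℤ) * (q (i - 1) : ℤ) - (p (i - 1) : ℤ) * (q (i + 1) : ℤ)) =
      3 * n := by
  have haux := farey_aux n hn p q hp0 hq0 hpn hqn hfarey
  have hsum : ∑ i ∈ Finset.Icc 1 n,
      ((p (i + 1) : ℤ) * (q (i - 1) : ℤ) - (p (i - 1) : ℤ) * (q (i + 1) : ℤ)) =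
      ∑ j ∈ Finset.range n,
        ((p (j + 2) : ℤ) * (q j : ℤ) - (p j : ℤ) * (q (j + 2) : ℤ)) := by
    rw [← Finset.Ico_add_one_right_eq_Icc, Finset.sum_Ico_eq_sum_range,
      show n + 1 - 1 = n from rfl]
    apply Finset.sum_congr rfl
    intro i _
    rw [show 1 + i + 1 = i + 2 from by omega, show 1 + i - 1 = i from by omega]
  rw [hsum, haux]
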